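/- Let m, n be positive integers and λ, μ > 0, and let X and Y be independent random variables with Gamma distributions of shape m, rate λ and shape n, rate μ respectively. Then Pr(Y < 1 + 1/X) = 1 − Σ_{k=0}^{n−1} (μ^k e^{−μ}/k!) ∫_0^∞ (1 + 1/t)^k (λ^m t^{m−1}/Γ(m)) e^{−μ/t − λt} dt. (This quantity is the secrecy outage probability SOP_i* of the link via UAV i under optimal power allocation.) -/

import Mathlib

open MeasureTheory ProbabilityTheory Real Set Filter Topology

namespace StmtAux

lemma hasDerivAt_tail (mu : ℝ) (n : ℕ) (t : ℝ) :
    HasDerivAt (fun t => Real.exp (-(mu * t)) *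
        ∑ k ∈ Finset.range (n + 1), (mu * t) ^ k / (Nat.factorial k))
      (-(mu ^ (n + 1) * t ^ n * Real.exp (-(mu * t)) / (Nat.factorial n))) t := by
  induction n with
  | zero =>
      have h : HasDerivAt (fun t : ℝ => Real.exp (-(mu * t)))
          (Real.exp (-(mu * t)) * (-mu)) t := by
        simpa using (((hasDerivAt_id t).const_mul mu).neg.exp)
      have heq : (fun t : ℝ => Real.exp (-(mu * t)) *
          ∑ k ∈ Finset.range 1, (mu * t) ^ k / (Nat.factorial k))
          = fun t : ℝ => Real.exp (-(mu * t)) := by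
        funext s; simp
      rw [heq]
      convert h using 1
      simp only [pow_one, pow_zero, Nat.factorial_zero, Nat.cast_one, mul_one, div_one]
      ring
  | succ n ih =>
      have hlin : HasDerivAt (fun t : ℝ => mu * t) mu t := by
        simpa using ((hasDerivAt_id t).const_mul mu)
      have hexp : HasDerivAt (fun t : ℝ => Real.exp (-(mu * t)))
          (Real.exp (-(mu * t)) * (-mu)) t := by
        simpa using hlin.neg.exp
      have hpow : HasDerivAt (fun t : ℝ => (mu * t) ^ (n + 1) / (Nat.factorial (n + 1)))
          (((n + 1 : ℕ) * (mu * t) ^ n * mu) / (Nat.factorial (n + 1))) t :=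
        (hlin.pow (n + 1)).div_const _
      have hterm := hexp.mul hpow
      have hsum := ih.add hterm
      have heq : (fun t : ℝ => Real.exp (-(mu * t)) *
            ∑ k ∈ Finset.range (n + 1 + 1), (mu * t) ^ k / (Nat.factorial k))
          = fun t : ℝ => (Real.exp (-(mu * t)) *
              ∑ k ∈ Finset.range (n + 1), (mu * t) ^ k / (Nat.factorial k))
            + Real.exp (-(mu * t)) * ((mu * t) ^ (n + 1) / (Nat.factorial (n + 1))) := by
        funext s
        rw [Finset.sum_range_succ, mul_add]
      rw [heq]
      convert hsum using 1
      · rfl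
      · rfl
      · rfl
      have hfact : (Nat.factorial (n + 1) : ℝ) = (n + 1) * Nat.factorial n := by
        push_cast [Nat.factorial_succ]; ring
      have h1 : (Nat.factorial n : ℝ) ≠ 0 := Nat.cast_ne_zero.mpr (Nat.factorial_ne_zero n)
      have h2 : (Nat.factorial (n + 1) : ℝ) ≠ 0 := Nat.cast_ne_zero.mpr (Nat.factorial_ne_zero _)
      rw [hfact]
      push_cast
      field_simp
      ring

lemma tendsto_tail (mu : ℝ) (hmu : 0 < mu) (n : ℕ) :
    Tendsto (fun t => Real.exp (-(mu * t)) *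
        ∑ k ∈ Finset.range (n + 1), (mu * t) ^ k / (Nat.factorial k)) atTop (𝓝 0) := by
  have hmul : Tendsto (fun t : ℝ => mu * t) atTop atTop :=
    Tendsto.const_mul_atTop hmu tendsto_id
  have h : Tendsto (fun t : ℝ => ∑ k ∈ Finset.range (n + 1),
      (mu * t) ^ k * Real.exp (-(mu * t)) / (Nat.factorial k)) atTop
      (𝓝 (∑ k ∈ Finset.range (n + 1), (0 : ℝ))) := by
    refine tendsto_finset_sum _ fun k _ => ?_
    have hk : Tendsto (fun x : ℝ => x ^ k * Real.exp (-x)) atTop (𝓝 0) :=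
      tendsto_pow_mul_exp_neg_atTop_nhds_zero k
    have := (hk.comp hmul).div_const (Nat.factorial k : ℝ)
    simpa using this
  simp only [Finset.sum_const, smul_zero] at h
  refine h.congr fun t => ?_
  rw [Finset.mul_sum]
  refine Finset.sum_congr rfl fun k _ => ?_
  ring

lemma tail_integral (mu : ℝ) (hmu : 0 < mu) (n : ℕ) (c : ℝ) (hc : 0 ≤ c) :
    ∫ t in Ioi c, mu ^ (n + 1) * t ^ n * Real.exp (-(mu * t)) / (Nat.factorial n)
      = Real.exp (-(mu * c)) * ∑ k ∈ Finset.range (n + 1), (mu * c) ^ k / (Nat.factorial k) := by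
  have key := integral_Ioi_of_hasDerivAt_of_nonneg' (a := c)
    (g := fun t => -(Real.exp (-(mu * t)) *
        ∑ k ∈ Finset.range (n + 1), (mu * t) ^ k / (Nat.factorial k)))
    (g' := fun t => mu ^ (n + 1) * t ^ n * Real.exp (-(mu * t)) / (Nat.factorial n))
    (l := 0)
    (fun x _ => by have := (hasDerivAt_tail mu n x).neg; simp only [neg_neg] at this; exact this)
    (fun x hx => by
      have hx0 : (0 : ℝ) < x := lt_of_le_of_lt hc hx
      positivity)
    (by simpa using (tendsto_tail mu hmu n).neg)
  simpa using key

lemma integrable_gammaPDFReal {a r : ℝ} (ha : 0 < a) (hr : 0 < r) :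
    Integrable (gammaPDFReal a r) := by
  refine ⟨(measurable_gammaPDFReal a r).aestronglyMeasurable, ?_⟩
  rw [hasFiniteIntegral_iff_ofReal (ae_of_all _ (gammaPDFReal_nonneg ha hr))]
  have : (fun x => ENNReal.ofReal (gammaPDFReal a r x)) = gammaPDF a r := rfl
  rw [this, lintegral_gammaPDF_eq_one ha hr]
  exact ENNReal.one_lt_top

lemma gamma_tail (n : ℕ) (hn : 0 < n) (mu : ℝ) (hmu : 0 < mu) (c : ℝ) (hc : 0 < c) :
    gammaMeasure n mu (Ici c)
      = ENNReal.ofReal (Real.exp (-(mu * c)) *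
          ∑ k ∈ Finset.range n, (mu * c) ^ k / (Nat.factorial k)) := by
  obtain ⟨N, rfl⟩ : ∃ N, n = N + 1 := ⟨n - 1, (Nat.succ_pred_eq_of_pos hn).symm⟩
  rw [gammaMeasure, withDensity_apply _ measurableSet_Ici,
    ← setLIntegral_congr (Ioi_ae_eq_Ici (a := c))]
  have hpdf : ∀ x ∈ Ioi c, gammaPDF ((N + 1 : ℕ) : ℝ) mu x
      = ENNReal.ofReal (mu ^ (N + 1) * x ^ N * Real.exp (-(mu * x)) / (Nat.factorial N)) := by
    intro x hx
    have hx0 : (0 : ℝ) < x := hc.trans hx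
    rw [gammaPDF_of_nonneg hx0.le]
    have hcast : ((N + 1 : ℕ) : ℝ) = (N : ℝ) + 1 := by push_cast; ring
    congr 1
    rw [hcast, Real.Gamma_nat_eq_factorial, show (N : ℝ) + 1 - 1 = (N : ℝ) by ring,
      Real.rpow_natCast, ← hcast, Real.rpow_natCast]
    ring
  rw [setLIntegral_congr_fun measurableSet_Ioi hpdf]
  rw [← ofReal_integral_eq_lintegral_ofReal]
  · rw [tail_integral mu hmu N c hc.le]
  · have : IntegrableOn (fun t => mu ^ (N + 1) * t ^ N * Real.exp (-(mu * t)) / (Nat.factorial N))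
        (Ioi c) := by
      refine integrableOn_Ioi_deriv_of_nonneg' (a := c)
        (g := fun t => -(Real.exp (-(mu * t)) *
            ∑ k ∈ Finset.range (N + 1), (mu * t) ^ k / (Nat.factorial k)))
        (l := 0)
        (fun x _ => by have := (hasDerivAt_tail mu N x).neg; simp only [neg_neg] at this; exact this)
        (fun x hx => by
          have hx0 : (0 : ℝ) < x := hc.trans hx
          positivity)
        (by simpa using (tendsto_tail mu hmu N).neg)
    exact this
  · rw [EventuallyLE, ae_restrict_iff' measurableSet_Ioi]
    refine ae_of_all _ fun x hx => ?_
    have hx0 : (0 : ℝ) < x := hc.trans hx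
    positivity

lemma pow_mul_exp_le (k : ℕ) (mu : ℝ) (hmu : 0 < mu) (c : ℝ) (hc : 0 ≤ c) :
    c ^ k * Real.exp (-(mu * c)) ≤ ((k : ℝ) / mu) ^ k := by
  cases k with
  | zero =>
      simp only [pow_zero, one_mul]
      exact Real.exp_le_one_iff.mpr (by nlinarith)
  | succ k =>
      set K : ℝ := (k : ℝ) + 1 with hK
      have hKpos : 0 < K := by positivity
      have h1 : mu * c / K ≤ Real.exp (mu * c / K) := by
        have := Real.add_one_le_exp (mu * c / K)
        linarith
      have h2 : c ≤ K / mu * Real.exp (mu * c / K) := by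
        have := mul_le_mul_of_nonneg_left h1 (le_of_lt (div_pos hKpos hmu))
        calc c = K / mu * (mu * c / K) := by field_simp
        _ ≤ K / mu * Real.exp (mu * c / K) := this
      have h3 : c ^ (k + 1) ≤ (K / mu * Real.exp (mu * c / K)) ^ (k + 1) :=
        pow_le_pow_left₀ hc h2 _
      have h4 : (Real.exp (mu * c / K)) ^ (k + 1) = Real.exp (mu * c) := by
        rw [← Real.exp_nat_mul]
        congr 1
        push_cast
        field_simp
        rw [hK]; ring
      have h5 : c ^ (k + 1) ≤ (K / mu) ^ (k + 1) * Real.exp (mu * c) := by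
        calc c ^ (k + 1) ≤ (K / mu * Real.exp (mu * c / K)) ^ (k + 1) := h3
        _ = (K / mu) ^ (k + 1) * Real.exp (mu * c) := by rw [mul_pow, h4]
      have hexp : (0 : ℝ) < Real.exp (-(mu * c)) := Real.exp_pos _
      calc c ^ (k + 1) * Real.exp (-(mu * c))
          ≤ (K / mu) ^ (k + 1) * Real.exp (mu * c) * Real.exp (-(mu * c)) :=
            mul_le_mul_of_nonneg_right h5 hexp.le
        _ = (K / mu) ^ (k + 1) := by
            rw [mul_assoc, ← Real.exp_add]
            simp
        _ = (((k + 1 : ℕ) : ℝ) / mu) ^ (k + 1) := by push_cast; ring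

end StmtAux

open StmtAux

theorem stmt_8 {Ω : Type*} [MeasurableSpace Ω] (P : Measure Ω) [IsProbabilityMeasure P]
    (m n : ℕ) (hm : 0 < m) (hn : 0 < n) (lam mu : ℝ) (hlam : 0 < lam) (hmu : 0 < mu)
    (X Y : Ω → ℝ) (hX : Measurable X) (hY : Measurable Y)
    (hXlaw : P.map X = gammaMeasure m lam) (hYlaw : P.map Y = gammaMeasure n mu)
    (hindep : IndepFun X Y P) :
    P {ω | Y ω < 1 + 1 / X ω}
      = ENNReal.ofReal
          (1 - ∑ k ∈ Finset.range n, (mu ^ k * Real.exp (-mu) / (Nat.factorial k)) *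
            ∫ t in Set.Ioi (0 : ℝ),
              (1 + 1 / t) ^ k * (lam ^ m * t ^ (m - 1) / Real.Gamma m) *
                Real.exp (-mu / t - lam * t)) := by
  have hm' : (0 : ℝ) < (m : ℝ) := Nat.cast_pos.mpr hm
  have hn' : (0 : ℝ) < (n : ℝ) := Nat.cast_pos.mpr hn
  haveI hpν : IsProbabilityMeasure (gammaMeasure m lam) := isProbabilityMeasure_gammaMeasure hm' hlam
  haveI hpρ : IsProbabilityMeasure (gammaMeasure n mu) := isProbabilityMeasure_gammaMeasure hn' hmu
  set S : Set (ℝ × ℝ) := {p : ℝ × ℝ | 1 + 1 / p.1 ≤ p.2} with hSdef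
  have hS : MeasurableSet S :=
    measurableSet_le ((measurable_const.div measurable_fst).const_add 1) measurable_snd
  have hBmeas : MeasurableSet {ω | 1 + 1 / X ω ≤ Y ω} :=
    measurableSet_le ((measurable_const.div hX).const_add 1) hY
  set F : ℕ → ℝ → ℝ := fun k x => gammaPDFReal m lam x *
      (Real.exp (-(mu * (1 + 1 / x))) * ((mu * (1 + 1 / x)) ^ k / (Nat.factorial k)))
    with hFdef
  set f : ℝ → ℝ := fun x => gammaPDFReal m lam x *
      (Real.exp (-(mu * (1 + 1 / x))) *
        ∑ k ∈ Finset.range n, (mu * (1 + 1 / x)) ^ k / (Nat.factorial k)) with hfdef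
  have hfsum : f = fun x => ∑ k ∈ Finset.range n, F k x := by
    funext x
    simp only [hfdef, hFdef, Finset.mul_sum]
  -- measurability of F k
  have hFmeas : ∀ k : ℕ, Measurable (F k) := by
    intro k
    have h1 : Measurable fun x : ℝ => 1 + 1 / x :=
      (measurable_const.div measurable_id).const_add 1
    exact (measurable_gammaPDFReal m lam).mul
      ((((h1.const_mul mu).neg).exp).mul
        (((h1.const_mul mu).pow_const k).div_const _))
  -- integrability of F k on Ioi 0
  have hFint : ∀ k : ℕ, IntegrableOn (F k) (Ioi 0) := by
    intro k
    have hint : Integrable (fun x => (mu ^ k * ((k : ℝ) / mu) ^ k / (Nat.factorial k)) *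
        gammaPDFReal m lam x) (volume.restrict (Ioi 0)) :=
      ((integrable_gammaPDFReal hm' hlam).restrict).const_mul _
    refine Integrable.mono' hint ((hFmeas k).aestronglyMeasurable) ?_
    rw [ae_restrict_iff' measurableSet_Ioi]
    refine ae_of_all _ fun x hx => ?_
    have hx0 : (0 : ℝ) < x := hx
    have h1x : (0 : ℝ) < 1 / x := by positivity
    have hc0 : (0 : ℝ) ≤ 1 + 1 / x := by linarith
    have hpdf0 : 0 ≤ gammaPDFReal m lam x := gammaPDFReal_nonneg hm' hlam x
    have hbound := pow_mul_exp_le k mu hmu (1 + 1 / x) hc0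
    have hFnn : 0 ≤ F k x := by
      refine mul_nonneg hpdf0 (mul_nonneg (Real.exp_pos _).le ?_)
      exact div_nonneg (pow_nonneg (mul_nonneg hmu.le hc0) _) (Nat.cast_nonneg _)
    rw [Real.norm_eq_abs, abs_of_nonneg hFnn]
    have hkey : Real.exp (-(mu * (1 + 1 / x))) * ((mu * (1 + 1 / x)) ^ k / (Nat.factorial k))
        ≤ mu ^ k * ((k : ℝ) / mu) ^ k / (Nat.factorial k) := by
      calc Real.exp (-(mu * (1 + 1 / x))) * ((mu * (1 + 1 / x)) ^ k / (Nat.factorial k))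
          = (mu ^ k / (Nat.factorial k)) *
              ((1 + 1 / x) ^ k * Real.exp (-(mu * (1 + 1 / x)))) := by
            rw [mul_pow]; ring
        _ ≤ (mu ^ k / (Nat.factorial k)) * ((k : ℝ) / mu) ^ k :=
            mul_le_mul_of_nonneg_left hbound (by positivity)
        _ = mu ^ k * ((k : ℝ) / mu) ^ k / (Nat.factorial k) := by ring
    calc F k x ≤ gammaPDFReal m lam x * (mu ^ k * ((k : ℝ) / mu) ^ k / (Nat.factorial k)) :=
          mul_le_mul_of_nonneg_left hkey hpdf0
      _ = mu ^ k * ((k : ℝ) / mu) ^ k / (Nat.factorial k) * gammaPDFReal m lam x := by ring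
  have hfint : IntegrableOn f (Ioi 0) := by
    rw [hfsum]
    exact integrable_finset_sum _ fun k _ => hFint k
  -- f is nonneg on Ioi 0
  have hfnn : ∀ x ∈ Ioi (0 : ℝ), 0 ≤ f x := by
    intro x hx
    have hx0 : (0 : ℝ) < x := hx
    have h1x : (0 : ℝ) < 1 / x := by positivity
    have hc0 : (0 : ℝ) ≤ 1 + 1 / x := by linarith
    refine mul_nonneg (gammaPDFReal_nonneg hm' hlam x) (mul_nonneg (Real.exp_pos _).le ?_)
    exact Finset.sum_nonneg fun k _ =>
      div_nonneg (pow_nonneg (mul_nonneg hmu.le hc0) _) (Nat.cast_nonneg _)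
  -- law of the pair
  have hmap : P.map (fun ω => (X ω, Y ω)) = (gammaMeasure m lam).prod (gammaMeasure n mu) := by
    rw [← hXlaw, ← hYlaw]
    exact (indepFun_iff_map_prod_eq_prod_map_map hX.aemeasurable hY.aemeasurable).mp hindep
  have hPB : P {ω | 1 + 1 / X ω ≤ Y ω}
      = ∫⁻ x, gammaMeasure n mu (Prod.mk x ⁻¹' S) ∂(gammaMeasure m lam) := by
    have h1 : {ω | 1 + 1 / X ω ≤ Y ω} = (fun ω => (X ω, Y ω)) ⁻¹' S := rfl
    rw [h1, ← Measure.map_apply (hX.prodMk hY) hS, hmap, Measure.prod_apply hS]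
  have h2 : ∫⁻ x, gammaMeasure n mu (Prod.mk x ⁻¹' S) ∂(gammaMeasure m lam)
      = ∫⁻ x, gammaPDF m lam x * gammaMeasure n mu (Prod.mk x ⁻¹' S) := by
    have hmpdf : Measurable (gammaPDF m lam) := (measurable_gammaPDFReal m lam).ennreal_ofReal
    rw [gammaMeasure, lintegral_withDensity_eq_lintegral_mul _
      hmpdf (measurable_measure_prodMk_left hS)]
    rfl
  have h3 : ∫⁻ x, gammaPDF m lam x * gammaMeasure n mu (Prod.mk x ⁻¹' S)
      = ∫⁻ x in Ioi (0 : ℝ), gammaPDF m lam x * gammaMeasure n mu (Prod.mk x ⁻¹' S) := by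
    rw [← lintegral_add_compl
      (fun x => gammaPDF m lam x * gammaMeasure n mu (Prod.mk x ⁻¹' S))
      (measurableSet_Ioi (a := (0 : ℝ)))]
    have hz : ∫⁻ x in (Ioi (0 : ℝ))ᶜ,
        gammaPDF m lam x * gammaMeasure n mu (Prod.mk x ⁻¹' S) = 0 := by
      rw [compl_Ioi, ← setLIntegral_congr (Iio_ae_eq_Iic (a := (0 : ℝ))),
        setLIntegral_congr_fun measurableSet_Iio
          (fun x (hx : x < 0) => by rw [gammaPDF_of_neg hx, zero_mul])]
      simp
    rw [hz, add_zero]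
  have h4 : ∫⁻ x in Ioi (0 : ℝ), gammaPDF m lam x * gammaMeasure n mu (Prod.mk x ⁻¹' S)
      = ∫⁻ x in Ioi (0 : ℝ), ENNReal.ofReal (f x) := by
    refine setLIntegral_congr_fun measurableSet_Ioi (fun x hx => ?_)
    have hx0 : (0 : ℝ) < x := hx
    have h1x : (0 : ℝ) < 1 / x := by positivity
    have hc0 : (0 : ℝ) < 1 + 1 / x := by linarith
    have hpre : Prod.mk x ⁻¹' S = Ici (1 + 1 / x) := rfl
    rw [hpre, gamma_tail n hn mu hmu _ hc0, gammaPDF,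
      ← ENNReal.ofReal_mul (gammaPDFReal_nonneg hm' hlam x)]
  have h5 : ∫⁻ x in Ioi (0 : ℝ), ENNReal.ofReal (f x)
      = ENNReal.ofReal (∫ x in Ioi (0 : ℝ), f x) := by
    rw [← ofReal_integral_eq_lintegral_ofReal hfint]
    rw [EventuallyLE, ae_restrict_iff' measurableSet_Ioi]
    exact ae_of_all _ fun x hx => hfnn x hx
  have h6 : ∀ k : ℕ, ∫ x in Ioi (0 : ℝ), F k x
      = (mu ^ k * Real.exp (-mu) / (Nat.factorial k)) *
        ∫ t in Ioi (0 : ℝ), (1 + 1 / t) ^ k * (lam ^ m * t ^ (m - 1) / Real.Gamma m) *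
          Real.exp (-mu / t - lam * t) := by
    intro k
    have hptwise : ∀ x ∈ Ioi (0 : ℝ), F k x
        = (mu ^ k * Real.exp (-mu) / (Nat.factorial k)) *
          ((1 + 1 / x) ^ k * (lam ^ m * x ^ (m - 1) / Real.Gamma m) *
            Real.exp (-mu / x - lam * x)) := by
      intro x hx
      have hx0 : (0 : ℝ) < x := hx
      have hpdfx : gammaPDFReal m lam x
          = lam ^ m * x ^ (m - 1) / Real.Gamma m * Real.exp (-(lam * x)) := by
        rw [gammaPDFReal, if_pos hx0.le,
          show (m : ℝ) - 1 = ((m - 1 : ℕ) : ℝ) by rw [Nat.cast_sub hm, Nat.cast_one],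
          Real.rpow_natCast, Real.rpow_natCast]
        ring
      have e1 : Real.exp (-(mu * (1 + 1 / x))) = Real.exp (-mu) * Real.exp (-(mu / x)) := by
        rw [← Real.exp_add]; congr 1; ring
      have e2 : Real.exp (-mu / x - lam * x)
          = Real.exp (-(mu / x)) * Real.exp (-(lam * x)) := by
        rw [← Real.exp_add]; congr 1; ring
      simp only [hFdef]
      rw [hpdfx, e1, e2, mul_pow]
      ring
    rw [setIntegral_congr_fun measurableSet_Ioi hptwise, integral_const_mul]
  have hIsum : ∫ x in Ioi (0 : ℝ), f x
      = ∑ k ∈ Finset.range n, (mu ^ k * Real.exp (-mu) / (Nat.factorial k)) *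
          ∫ t in Ioi (0 : ℝ), (1 + 1 / t) ^ k * (lam ^ m * t ^ (m - 1) / Real.Gamma m) *
            Real.exp (-mu / t - lam * t) := by
    rw [hfsum, integral_finset_sum _ fun k _ => hFint k]
    exact Finset.sum_congr rfl fun k _ => h6 k
  have hSnonneg : (0 : ℝ) ≤ ∑ k ∈ Finset.range n,
      (mu ^ k * Real.exp (-mu) / (Nat.factorial k)) *
        ∫ t in Ioi (0 : ℝ), (1 + 1 / t) ^ k * (lam ^ m * t ^ (m - 1) / Real.Gamma m) *
          Real.exp (-mu / t - lam * t) := by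
    rw [← hIsum]
    exact setIntegral_nonneg measurableSet_Ioi hfnn
  have hPB' : P {ω | 1 + 1 / X ω ≤ Y ω}
      = ENNReal.ofReal (∑ k ∈ Finset.range n,
          (mu ^ k * Real.exp (-mu) / (Nat.factorial k)) *
            ∫ t in Ioi (0 : ℝ), (1 + 1 / t) ^ k * (lam ^ m * t ^ (m - 1) / Real.Gamma m) *
              Real.exp (-mu / t - lam * t)) := by
    rw [hPB, h2, h3, h4, h5, hIsum]
  have hcompl : {ω | Y ω < 1 + 1 / X ω} = {ω | 1 + 1 / X ω ≤ Y ω}ᶜ := by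
    ext ω; simp [not_le]
  rw [hcompl, prob_compl_eq_one_sub hBmeas, hPB', ← ENNReal.ofReal_one]
  exact (ENNReal.ofReal_sub 1 hSnonneg).symm
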